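/- For any matroid M and any k ≥ 1, the (k+1)-th chain Tutte polynomial determines the k-th via the specialization T^{k+1}_M(2, 2x_1−1, x_2,…,x_k; 2, 2^{-1}y_1 + 2^{-1}, y_2,…,y_k) = 2^{rk(M)} · T^k_M(x_1,…,x_k; y_1,…,y_k). -/

import Mathlib

open Finset

def IsMatroidRk (α : Type*) [DecidableEq α] [Fintype α] (rk : Finset α → ℕ) : Prop :=
  rk ∅ = 0 ∧ (∀ a : α, rk {a} ≤ 1) ∧ (∀ A B : Finset α, A ⊆ B → rk A ≤ rk B) ∧
    (∀ A B : Finset α, rk (A ∩ B) + rk (A ∪ B) ≤ rk A + rk B)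

def chains (α : Type*) [DecidableEq α] [Fintype α] (k : ℕ) : Finset (Fin k → Finset α) :=
  Finset.univ.filter (fun f => ∀ i j : Fin k, i ≤ j → f i ⊆ f j)

/-- The k-th chain Whitney rank generating polynomial. -/
def chainWhitney {α : Type*} [DecidableEq α] [Fintype α] (rk : Finset α → ℕ) (k : ℕ)
    {R : Type*} [CommRing R] (a b : Fin k → R) : R :=
  ∑ f ∈ chains α k, ∏ i,
    a i ^ (rk Finset.univ - rk (f i)) * b i ^ ((f i).card - rk (f i))

/-- The k-th chain Tutte polynomial. -/
def chainTutte {α : Type*} [DecidableEq α] [Fintype α] (rk : Finset α → ℕ) (k : ℕ)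
    {R : Type*} [CommRing R] (x y : Fin k → R) : R :=
  chainWhitney rk k (fun i => x i - 1) (fun i => y i - 1)


private lemma rk_le_card' {α : Type*} [DecidableEq α] [Fintype α] {rk : Finset α → ℕ}
    (h : IsMatroidRk α rk) (S : Finset α) : rk S ≤ S.card := by
  classical
  induction S using Finset.induction_on with
  | empty => simp [h.1]
  | @insert a S ha ih =>
    have hsub := h.2.2.2 {a} S
    have h1 := h.2.1 a
    have : rk (insert a S) ≤ rk {a} + rk S := by
      have : rk ({a} ∪ S) ≤ rk {a} + rk S := le_trans (Nat.le_add_left _ _) hsub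
      rw [Finset.insert_eq]; exact this
    calc rk (insert a S) ≤ rk {a} + rk S := this
      _ ≤ 1 + S.card := add_le_add h1 ih
      _ = (insert a S).card := by rw [Finset.card_insert_of_notMem ha]; omega

private lemma cons_mem_chains_iff {α : Type*} [DecidableEq α] [Fintype α] {k : ℕ}
    (S : Finset α) (g : Fin (k+1) → Finset α) :
    Fin.cons S g ∈ chains α (k+2) ↔ g ∈ chains α (k+1) ∧ S ⊆ g 0 := by
  simp only [chains, Finset.mem_filter, Finset.mem_univ, true_and]
  constructor
  · intro hf
    refine ⟨fun i j hij => ?_, ?_⟩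
    · have := hf i.succ j.succ (by simpa using hij)
      simpa using this
    · have := hf 0 (Fin.succ 0) (by simp [Fin.le_def])
      simpa using this
  · rintro ⟨hg, hS⟩ i j hij
    rcases Fin.eq_zero_or_eq_succ i with rfl | ⟨i', rfl⟩
    · rcases Fin.eq_zero_or_eq_succ j with rfl | ⟨j', rfl⟩
      · simp
      · simp only [Fin.cons_zero, Fin.cons_succ]
        exact hS.trans (hg 0 j' (Fin.zero_le _))
    · rcases Fin.eq_zero_or_eq_succ j with rfl | ⟨j', rfl⟩
      · exact absurd (Fin.le_zero_iff.mp hij) (Fin.succ_ne_zero i')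
      · simp only [Fin.cons_succ]
        exact hg i' j' (by simpa using hij)

/-- T^{k+1}_M(2, 2x₁−1, x₂, …, x_k; 2, y₁/2 + 1/2, y₂, …, y_k)
    = 2^{rk M} · T^k_M(x; y).  Here the case of general k ≥ 1 is stated with
    the index written as `k+1`. -/
theorem chainTutte_succ_specialization {α : Type*} [DecidableEq α] [Fintype α]
    (rk : Finset α → ℕ) (h : IsMatroidRk α rk) (k : ℕ)
    (x y : Fin (k + 1) → ℚ) :
    chainTutte rk (k + 2)
        (Fin.cons 2 (Function.update x 0 (2 * x 0 - 1)))
        (Fin.cons 2 (Function.update y 0 (2⁻¹ * y 0 + 2⁻¹))) =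
      2 ^ (rk Finset.univ) * chainTutte rk (k + 1) x y := by
  classical
  obtain ⟨h0, h1, hmono, hsubm⟩ := h
  have hcard : ∀ S : Finset α, rk S ≤ S.card := rk_le_card' ⟨h0, h1, hmono, hsubm⟩
  set r := rk Finset.univ with hr
  unfold chainTutte chainWhitney
  set X : Fin (k+2) → ℚ := Fin.cons 2 (Function.update x 0 (2 * x 0 - 1)) with hX
  set Y : Fin (k+2) → ℚ := Fin.cons 2 (Function.update y 0 (2⁻¹ * y 0 + 2⁻¹)) with hY
  have key : ∑ f ∈ chains α (k+2), ∏ i, (X i - 1) ^ (r - rk (f i)) * (Y i - 1) ^ ((f i).card - rk (f i))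
      = ∑ p ∈ (chains α (k+1)).sigma (fun g => (g 0).powerset),
          ∏ i, (X i - 1) ^ (r - rk ((Fin.cons p.2 p.1 : Fin (k+2) → Finset α) i))
            * (Y i - 1) ^ (((Fin.cons p.2 p.1 : Fin (k+2) → Finset α) i).card - rk ((Fin.cons p.2 p.1 : Fin (k+2) → Finset α) i)) := by
    refine Finset.sum_nbij' (fun f => ⟨Fin.tail f, f 0⟩) (fun p => Fin.cons p.2 p.1) ?_ ?_ ?_ ?_ ?_
    · intro f hf
      rw [Finset.mem_sigma]
      have hf' : Fin.cons (f 0) (Fin.tail f) ∈ chains α (k+2) := by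
        rwa [Fin.cons_self_tail]
      rw [cons_mem_chains_iff] at hf'
      exact ⟨hf'.1, Finset.mem_powerset.2 hf'.2⟩
    · intro p hp
      rw [Finset.mem_sigma] at hp
      exact (cons_mem_chains_iff _ _).2 ⟨hp.1, Finset.mem_powerset.1 hp.2⟩
    · intro f hf
      simp [Fin.cons_self_tail]
    · intro p hp
      simp [Fin.tail_cons]
    · intro f hf
      rw [Fin.cons_self_tail]
  rw [key, Finset.sum_sigma]
  have step : ∀ g ∈ chains α (k+1),
      (∑ S ∈ (g 0).powerset, ∏ i, (X i - 1) ^ (r - rk ((Fin.cons S g : Fin (k+2) → Finset α) i))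
          * (Y i - 1) ^ (((Fin.cons S g : Fin (k+2) → Finset α) i).card - rk ((Fin.cons S g : Fin (k+2) → Finset α) i)))
      = 2 ^ r * ∏ i, (x i - 1) ^ (r - rk (g i)) * (y i - 1) ^ ((g i).card - rk (g i)) := by
    intro g hg
    have hconst : ∀ S : Finset α,
        (∏ i, (X i - 1) ^ (r - rk ((Fin.cons S g : Fin (k+2) → Finset α) i))
          * (Y i - 1) ^ (((Fin.cons S g : Fin (k+2) → Finset α) i).card - rk ((Fin.cons S g : Fin (k+2) → Finset α) i)))
        = ∏ i : Fin (k+1), (X i.succ - 1) ^ (r - rk (g i)) * (Y i.succ - 1) ^ ((g i).card - rk (g i)) := by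
      intro S
      rw [Fin.prod_univ_succ]
      have e1 : X (0 : Fin (k+2)) = 2 := by rw [hX, Fin.cons_zero]
      have e2 : Y (0 : Fin (k+2)) = 2 := by rw [hY, Fin.cons_zero]
      simp only [e1, e2, Fin.cons_zero, Fin.cons_succ]
      norm_num
    rw [Finset.sum_congr rfl (fun S _ => hconst S), Finset.sum_const, Finset.card_powerset,
      nsmul_eq_mul, Nat.cast_pow, Nat.cast_ofNat]
    rw [Fin.prod_univ_succ]
    have hX0 : X (0 : Fin (k+1)).succ - 1 = 2 * (x 0 - 1) := by
      rw [hX, Fin.cons_succ, Function.update_self]; ring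
    have hY0 : Y (0 : Fin (k+1)).succ - 1 = 2⁻¹ * (y 0 - 1) := by
      rw [hY, Fin.cons_succ, Function.update_self]; ring
    have hXi : ∀ i : Fin k, X i.succ.succ - 1 = x i.succ - 1 := by
      intro i
      rw [hX, Fin.cons_succ, Function.update_of_ne (Fin.succ_ne_zero i)]
    have hYi : ∀ i : Fin k, Y i.succ.succ - 1 = y i.succ - 1 := by
      intro i
      rw [hY, Fin.cons_succ, Function.update_of_ne (Fin.succ_ne_zero i)]
    rw [hX0, hY0]
    have harith : (2:ℚ) ^ (g 0).card * ((2 * (x 0 - 1)) ^ (r - rk (g 0)) * (2⁻¹ * (y 0 - 1)) ^ ((g 0).card - rk (g 0)))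
        = 2 ^ r * ((x 0 - 1) ^ (r - rk (g 0)) * (y 0 - 1) ^ ((g 0).card - rk (g 0))) := by
      have ha : rk (g 0) ≤ r := hmono _ _ (Finset.subset_univ _)
      have hb : rk (g 0) ≤ (g 0).card := hcard _
      rw [mul_pow, mul_pow]
      have h2 : (2:ℚ) ^ (g 0).card * ((2:ℚ)⁻¹) ^ ((g 0).card - rk (g 0)) = 2 ^ rk (g 0) := by
        have e : (2:ℚ) ^ (g 0).card = 2 ^ rk (g 0) * 2 ^ ((g 0).card - rk (g 0)) := by
          rw [← pow_add]; congr 1; omega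
        rw [inv_pow, e, mul_inv_cancel_right₀ (by positivity)]
      have h3 : (2:ℚ) ^ rk (g 0) * 2 ^ (r - rk (g 0)) = 2 ^ r := by
        rw [← pow_add]; congr 1; omega
      calc (2:ℚ) ^ (g 0).card * ((2:ℚ) ^ (r - rk (g 0)) * (x 0 - 1) ^ (r - rk (g 0)) *
              (((2:ℚ)⁻¹) ^ ((g 0).card - rk (g 0)) * (y 0 - 1) ^ ((g 0).card - rk (g 0))))
          = ((2:ℚ) ^ (g 0).card * ((2:ℚ)⁻¹) ^ ((g 0).card - rk (g 0))) * (2:ℚ) ^ (r - rk (g 0)) *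
              ((x 0 - 1) ^ (r - rk (g 0)) * (y 0 - 1) ^ ((g 0).card - rk (g 0))) := by ring
        _ = _ := by rw [h2, h3]
    rw [Fin.prod_univ_succ (f := fun i : Fin (k+1) => (x i - 1) ^ (r - rk (g i)) * (y i - 1) ^ ((g i).card - rk (g i)))]
    calc (2:ℚ) ^ (g 0).card * ((2 * (x 0 - 1)) ^ (r - rk (g 0)) * (2⁻¹ * (y 0 - 1)) ^ ((g 0).card - rk (g 0)) *
          ∏ i : Fin k, (X i.succ.succ - 1) ^ (r - rk (g i.succ)) * (Y i.succ.succ - 1) ^ ((g i.succ).card - rk (g i.succ)))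
        = ((2:ℚ) ^ (g 0).card * ((2 * (x 0 - 1)) ^ (r - rk (g 0)) * (2⁻¹ * (y 0 - 1)) ^ ((g 0).card - rk (g 0)))) *
          ∏ i : Fin k, (X i.succ.succ - 1) ^ (r - rk (g i.succ)) * (Y i.succ.succ - 1) ^ ((g i.succ).card - rk (g i.succ)) := by ring
      _ = 2 ^ r * ((x 0 - 1) ^ (r - rk (g 0)) * (y 0 - 1) ^ ((g 0).card - rk (g 0)) *
          ∏ i : Fin k, (x i.succ - 1) ^ (r - rk (g i.succ)) * (y i.succ - 1) ^ ((g i.succ).card - rk (g i.succ))) := by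
          rw [harith]
          rw [Finset.prod_congr rfl (fun i _ => by rw [hXi i, hYi i])]
          ring
  rw [Finset.sum_congr rfl step, ← Finset.mul_sum]
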